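/- Let P = {x ∈ ℝ^n : Ax ≤ b, 0 ≤ x_i ≤ u_i for i ∈ I} be a rational polytope with I = {1,…,l}, and let ℬ = (B^1,…,B^l) be a binarization scheme in which each B^i is affine with integral data: every (x_i, z_i) ∈ B^i satisfies x_i = a_i·z_i + b_i with a_i ∈ ℤ^{q_i} and b_i ∈ ℤ. Then SC(P_ℬ, I_ℬ) = SC(P_ℬ, I′), where I′ = I_ℬ \ {1,…,l} consists of the indices of the binarization variables only. -/
import Mathlib


open Set

/-- The split closure of `P` with respect to a family `Λ` of (integral) linear
functionals: the intersection over all `f ∈ Λ` and all integers `c` of the convex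
hull of `P` minus the split set `{x : c < f x < c + 1}`. -/
noncomputable def splitClosure {E : Type*} [AddCommGroup E] [Module ℝ E]
    (Λ : Set (E → ℝ)) (P : Set E) : Set E :=
  ⋂ f ∈ Λ, ⋂ c : ℤ, convexHull ℝ (P \ {x | (c : ℝ) < f x ∧ f x < c + 1})

/-- A rational polytope in `ℝ × ℝ^q`: the convex hull of finitely many rational points. -/
def IsRatPolytopeBin (q : ℕ) (B : Set (ℝ × (Fin q → ℝ))) : Prop :=
  ∃ V : Finset (ℝ × (Fin q → ℝ)),
    (∀ p ∈ V, (∃ r : ℚ, p.1 = (r : ℝ)) ∧ ∀ j, ∃ r : ℚ, p.2 j = (r : ℝ)) ∧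
    B = convexHull ℝ (V : Set (ℝ × (Fin q → ℝ)))

/-- `B ∈ Γ^q_u`: a binarization polytope for a variable `x ∈ {0,…,u}` using `q` binary
variables: a rational polytope contained in `[0,u] × [0,1]^q` whose set of 0-1 points
projects (in the `x` coordinate) exactly onto `{0,1,…,u}`. -/
def IsBinPoly (u q : ℕ) (B : Set (ℝ × (Fin q → ℝ))) : Prop :=
  IsRatPolytopeBin q B ∧
  (∀ p ∈ B, 0 ≤ p.1 ∧ p.1 ≤ (u : ℝ) ∧ ∀ j, 0 ≤ p.2 j ∧ p.2 j ≤ 1) ∧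
  Prod.fst '' (B ∩ {p | ∀ j, p.2 j = 0 ∨ p.2 j = 1}) = {x : ℝ | ∃ k : ℕ, k ≤ u ∧ x = (k : ℝ)}

/-- A unimodular binarization polytope `B ∈ Γ^u_u`: a perfect binarization polytope
`B = conv{(j, w^j) : j = 0,…,u}` with `w^j ∈ {0,1}^u` such that the `u × u` matrix
with columns `w^j - w^0`, `j = 1,…,u`, is unimodular (integral with determinant `±1`). -/
def IsUnimodularBin (u : ℕ) (B : Set (ℝ × (Fin u → ℝ))) : Prop :=
  IsBinPoly u u B ∧
  ∃ w : Fin (u + 1) → Fin u → ℝ,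
    (∀ j i, w j i = 0 ∨ w j i = 1) ∧
    B = convexHull ℝ {p : ℝ × (Fin u → ℝ) | ∃ j : Fin (u + 1), p = (((j : ℕ) : ℝ), w j)} ∧
    ∃ N : Matrix (Fin u) (Fin u) ℤ,
      (∀ i j : Fin u, (N i j : ℝ) = w j.succ i - w 0 i) ∧ (N.det = 1 ∨ N.det = -1)

/-- The binary extended formulation `P_ℬ ⊆ ℝ^n × ℝ^{q₁} × ⋯ × ℝ^{q_l}` associated with a
binarization scheme `ℬ = (B^1,…,B^l)`: the set of `(x,z)` with `x ∈ P` and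
`(x_i, z_i) ∈ B^i` for each `i ∈ I = {1,…,l}`. -/
def extForm {n l : ℕ} (hln : l ≤ n) {q : Fin l → ℕ} (P : Set (Fin n → ℝ))
    (B : (i : Fin l) → Set (ℝ × (Fin (q i) → ℝ))) :
    Set ((Fin n → ℝ) × ((i : Fin l) → Fin (q i) → ℝ)) :=
  {p | p.1 ∈ P ∧ ∀ i : Fin l, (p.1 (Fin.castLE hln i), p.2 i) ∈ B i}

/-- The family of split functionals on the extended space corresponding to the index set
`I_ℬ = {1,…,l} ∪ {n+1,…,n+q}`: integer coefficients on `x_1,…,x_l` and on all of the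
binarization variables `z`, zero coefficients on `x_{l+1},…,x_n`. -/
def extSplits (n l : ℕ) (hln : l ≤ n) (q : Fin l → ℕ) :
    Set (((Fin n → ℝ) × ((i : Fin l) → Fin (q i) → ℝ)) → ℝ) :=
  {f | ∃ (π : Fin l → ℤ) (c : (i : Fin l) → Fin (q i) → ℤ),
    f = fun p => (∑ i, (π i : ℝ) * p.1 (Fin.castLE hln i)) +
      ∑ i, ∑ j, (c i j : ℝ) * p.2 i j}

/-- The family of split functionals on the extended space corresponding to the index set
`I' = I_ℬ \ {1,…,l}`: integer coefficients on the binarization variables only. -/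
def extSplitsZ (n l : ℕ) (q : Fin l → ℕ) :
    Set (((Fin n → ℝ) × ((i : Fin l) → Fin (q i) → ℝ)) → ℝ) :=
  {f | ∃ c : (i : Fin l) → Fin (q i) → ℤ,
    f = fun p => ∑ i, ∑ j, (c i j : ℝ) * p.2 i j}

/-- Let `P` be a rational polytope as above and `ℬ = (B^1,…,B^l)` a
binarization scheme in which each `B^i` is affine with integral data: every
`(x_i,z_i) ∈ B^i` satisfies `x_i = a_i·z_i + b_i` with `a_i ∈ ℤ^{q_i}`, `b_i ∈ ℤ`.
Then `SC(P_ℬ, I_ℬ) = SC(P_ℬ, I')`, where `I'` consists of the indices of the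
binarization variables only. -/
theorem stmt16 (n l m : ℕ) (hln : l ≤ n)
    (A : Fin m → Fin n → ℚ) (b : Fin m → ℚ) (u : Fin l → ℕ) (hu : ∀ i, 0 < u i)
    (P : Set (Fin n → ℝ))
    (hP : P = {x | (∀ r, ∑ j, (A r j : ℝ) * x j ≤ (b r : ℝ)) ∧
      ∀ i : Fin l, 0 ≤ x (Fin.castLE hln i) ∧ x (Fin.castLE hln i) ≤ (u i : ℝ)})
    (hPbdd : Bornology.IsBounded P)
    (q : Fin l → ℕ)
    (B : (i : Fin l) → Set (ℝ × (Fin (q i) → ℝ)))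
    (hB : ∀ i, IsBinPoly (u i) (q i) (B i))
    (a : (i : Fin l) → Fin (q i) → ℤ) (β : Fin l → ℤ)
    (haff : ∀ i, ∀ p ∈ B i, p.1 = (∑ j, (a i j : ℝ) * p.2 j) + (β i : ℝ)) :
    splitClosure (extSplits n l hln q) (extForm hln P B) =
      splitClosure (extSplitsZ n l q) (extForm hln P B) := by

  ext p
  simp only [splitClosure, Set.mem_iInter]
  constructor
  · -- from the larger family to the z-only family
    intro h f hf c0
    obtain ⟨cz, rfl⟩ := hf
    have : (fun p : (Fin n → ℝ) × ((i : Fin l) → Fin (q i) → ℝ) =>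
        ∑ i, ∑ j, (cz i j : ℝ) * p.2 i j) ∈ extSplits n l hln q := by
      refine ⟨0, cz, ?_⟩
      funext p
      simp
    exact h _ this c0
  · intro h f hf c0
    obtain ⟨π, cz, rfl⟩ := hf
    set K : ℤ := ∑ i, π i * β i with hK
    set G : ((Fin n → ℝ) × ((i : Fin l) → Fin (q i) → ℝ)) → ℝ :=
      fun p => ∑ i, ∑ j, ((π i * a i j + cz i j : ℤ) : ℝ) * p.2 i j with hG
    have hGmem : G ∈ extSplitsZ n l q := ⟨fun i j => π i * a i j + cz i j, rfl⟩
    set F : ((Fin n → ℝ) × ((i : Fin l) → Fin (q i) → ℝ)) → ℝ :=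
      fun p => (∑ i, (π i : ℝ) * p.1 (Fin.castLE hln i)) +
        ∑ i, ∑ j, (cz i j : ℝ) * p.2 i j with hF
    have key : ∀ x ∈ extForm hln P B, F x = G x + (K : ℝ) := by
      intro x hx
      have hx2 := hx.2
      have hxi : ∀ i : Fin l, x.1 (Fin.castLE hln i)
          = (∑ j, (a i j : ℝ) * x.2 i j) + (β i : ℝ) := fun i =>
        haff i _ (hx2 i)
      have hterm : ∀ i : Fin l, (π i : ℝ) * x.1 (Fin.castLE hln i) + ∑ j, (cz i j : ℝ) * x.2 i j
          = (∑ j, ((π i : ℝ) * (a i j : ℝ) + (cz i j : ℝ)) * x.2 i j) + (π i : ℝ) * (β i : ℝ) := by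
        intro i
        rw [hxi i, mul_add, Finset.mul_sum, add_right_comm, ← Finset.sum_add_distrib]
        congr 1
        exact Finset.sum_congr rfl fun j _ => by ring
      simp only [hF, hG, hK]
      push_cast
      rw [← Finset.sum_add_distrib, ← Finset.sum_add_distrib]
      exact Finset.sum_congr rfl fun i _ => hterm i
    have hsets : extForm hln P B \ {x | (c0 : ℝ) < F x ∧ F x < c0 + 1}
        = extForm hln P B \ {x | ((c0 - K : ℤ) : ℝ) < G x ∧ G x < (c0 - K : ℤ) + 1} := by
      ext x
      simp only [Set.mem_diff, Set.mem_setOf_eq]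
      constructor
      · rintro ⟨hxP, hxc⟩
        refine ⟨hxP, fun hc => hxc ?_⟩
        have := key x hxP
        push_cast at hc ⊢
        constructor <;> linarith [hc.1, hc.2]
      · rintro ⟨hxP, hxc⟩
        refine ⟨hxP, fun hc => hxc ?_⟩
        have := key x hxP
        push_cast
        constructor <;> linarith [hc.1, hc.2]
    have := h G hGmem (c0 - K)
    rw [← hsets] at this
    exact this
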